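/- Let F be a field, Z an F-scheme of finite type, ℓ a prime, and d the smallest positive integer coprime to ℓ such that Z has a point over some finite separable extension of F of degree d. If E/F is a finite separable extension of degree d with ξ ∈ Z(E), and σ₁, …, σ_d are the distinct F-embeddings of E into a separable closure of F, then the points σ₁(ξ), …, σ_d(ξ) ∈ Z(F^sep) are pairwise distinct. -/

import Mathlib

open AlgebraicGeometry CategoryTheory

universe u

/-- `Z` has a point over the `F`-algebra `A`: a morphism `Spec A ⟶ Z` over `Spec F`. -/
def HasPoint {F : Type u} [Field F] (Z : Scheme.{u}) (f : Z ⟶ Spec (CommRingCat.of F))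
    (A : Type u) [CommRing A] [Algebra F A] : Prop :=
  ∃ g : Spec (CommRingCat.of A) ⟶ Z,
    g ≫ f = Spec.map (CommRingCat.ofHom (algebraMap F A))

/-- Let `F` be a field, `Z` an `F`-scheme of finite type, `ℓ` a prime,
and `d` the smallest positive integer coprime to `ℓ` such that `Z` has a point over some
finite separable extension of `F` of degree `d`.  If `E/F` is a finite separable
extension of degree `d` with a point `ξ ∈ Z(E)` (the morphism `g`), and
`σ₁, …, σ_d : E →ₐ[F] F^sep` are the distinct `F`-embeddings of `E` into a separable
closure, then the induced points `σᵢ(ξ) ∈ Z(F^sep)` are pairwise distinct; i.e. the map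
`σ ↦ σ(ξ)` is injective. -/
theorem stmt_7 {F : Type u} [Field F] {ℓ : ℕ} (hℓ : ℓ.Prime) (d : ℕ)
    (Z : Scheme.{u}) (f : Z ⟶ Spec (CommRingCat.of F))
    [LocallyOfFiniteType f] [QuasiCompact f]
    (hd_pos : 0 < d) (hd_cop : Nat.Coprime d ℓ)
    (hmin : ∀ (E' : Type u) [Field E'] [Algebra F E'] [FiniteDimensional F E']
      [Algebra.IsSeparable F E'], Nat.Coprime (Module.finrank F E') ℓ →
      HasPoint Z f E' → d ≤ Module.finrank F E')
    (E : Type u) [Field E] [Algebra F E] [FiniteDimensional F E] [Algebra.IsSeparable F E]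
    (hdeg : Module.finrank F E = d)
    (g : Spec (CommRingCat.of E) ⟶ Z)
    (hg : g ≫ f = Spec.map (CommRingCat.ofHom (algebraMap F E))) :
    Function.Injective (fun σ : E →ₐ[F] SeparableClosure F =>
      Spec.map (CommRingCat.ofHom σ.toRingHom) ≫ g) := by
  classical
  -- decompose `g` through the residue field of its image point
  set p := (Scheme.SpecToEquivOfField E Z) g with hp
  obtain ⟨z, φ⟩ := p
  have hgfact : g = Spec.map φ ≫ Z.fromSpecResidueField z := by
    conv_lhs => rw [← (Scheme.SpecToEquivOfField E Z).symm_apply_apply g, ← hp]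
    rfl
  -- the structure map on the residue field
  set ρ : CommRingCat.of F ⟶ Z.residueField z :=
    Spec.preimage (Z.fromSpecResidueField z ≫ f) with hρdef
  have hρ : Spec.map ρ = Z.fromSpecResidueField z ≫ f := Spec.map_preimage _
  -- algebra structures
  letI : Algebra F (Z.residueField z) := ρ.hom.toAlgebra
  letI : Algebra (Z.residueField z) E := φ.hom.toAlgebra
  have hcomp : (algebraMap (Z.residueField z) E).comp (algebraMap F (Z.residueField z))
      = algebraMap F E := by
    have h1 : Spec.map (ρ ≫ φ) = Spec.map (CommRingCat.ofHom (algebraMap F E)) := by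
      rw [Spec.map_comp, hρ, ← hg, hgfact, Category.assoc]
    have h2 : ρ ≫ φ = CommRingCat.ofHom (algebraMap F E) := Spec.map_injective h1
    exact congrArg CommRingCat.Hom.hom h2
  haveI : IsScalarTower F (Z.residueField z) E :=
    IsScalarTower.of_algebraMap_eq' hcomp.symm
  haveI : FiniteDimensional F (Z.residueField z) :=
    FiniteDimensional.of_injective (IsScalarTower.toAlgHom F (Z.residueField z) E).toLinearMap
      (algebraMap (Z.residueField z) E).injective
  haveI : FiniteDimensional (Z.residueField z) E :=
    FiniteDimensional.right F (Z.residueField z) E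
  haveI : Algebra.IsSeparable F (Z.residueField z) :=
    Algebra.isSeparable_tower_bot_of_isSeparable F (Z.residueField z) E
  have hmul : Module.finrank F (Z.residueField z) * Module.finrank (Z.residueField z) E = d := by
    rw [Module.finrank_mul_finrank, hdeg]
  have hdvd : Module.finrank F (Z.residueField z) ∣ d := ⟨_, hmul.symm⟩
  have hcop : Nat.Coprime (Module.finrank F (Z.residueField z)) ℓ :=
    Nat.Coprime.coprime_dvd_left hdvd hd_cop
  have hpoint : HasPoint Z f (Z.residueField z) := by
    refine ⟨Z.fromSpecResidueField z, ?_⟩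
    rw [← hρ]; rfl
  have hle : d ≤ Module.finrank F (Z.residueField z) := hmin _ hcop hpoint
  have heq : Module.finrank F (Z.residueField z) = d :=
    le_antisymm (Nat.le_of_dvd hd_pos hdvd) hle
  have h1 : Module.finrank (Z.residueField z) E = 1 := by
    have := hmul
    rw [heq] at this
    exact Nat.eq_of_mul_eq_mul_left hd_pos (by rw [this, mul_one])
  -- the residue field surjects onto E
  have hsurj : Function.Surjective (algebraMap (Z.residueField z) E) := by
    intro x
    have hbot : (⊥ : Subalgebra (Z.residueField z) E) = ⊤ :=
      Subalgebra.bot_eq_top_of_finrank_eq_one h1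
    have : x ∈ (⊥ : Subalgebra (Z.residueField z) E) := hbot ▸ Algebra.mem_top
    exact Algebra.mem_bot.mp this
  -- conclude injectivity
  intro σ₁ σ₂ h
  simp only at h
  rw [hgfact, ← Category.assoc, ← Category.assoc, ← Spec.map_comp, ← Spec.map_comp,
    cancel_mono, Spec.map_inj] at h
  have hring : σ₁.toRingHom.comp φ.hom = σ₂.toRingHom.comp φ.hom := congrArg CommRingCat.Hom.hom h
  refine DFunLike.ext _ _ fun x => ?_
  obtain ⟨y, rfl⟩ := hsurj x
  exact RingHom.congr_fun hring y
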